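/- Let k ≥ 1, g, ε ∈ ℝᵏ, v > 0 with M₂(g) ≥ ξ√v for some ξ > 0, and suppose g and ε point in the same direction. Then (1/k)·(g/√v)·ε ≥ ξ·M₂(ε). -/

import Mathlib

open Finset

theorem amos_progress_lower_bound (k : ℕ) (hk : 1 ≤ k) (g ε : Fin k → ℝ) (v ξ : ℝ)
    (hv : 0 < v) (hξ : 0 < ξ)
    (hM2g : ξ * Real.sqrt v ≤ Real.sqrt ((1 / (k : ℝ)) * ∑ i, g i ^ 2))
    (c : ℝ) (hc : 0 ≤ c) (hg : g = fun i => c * ε i) :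
    ξ * Real.sqrt ((1 / (k : ℝ)) * ∑ i, ε i ^ 2) ≤
      (1 / (k : ℝ)) * ∑ i, (g i / Real.sqrt v) * ε i := by
  subst hg
  set S : ℝ := (1 / (k : ℝ)) * ∑ i, ε i ^ 2 with hS
  have hk0 : (0:ℝ) < (k:ℝ) := by exact_mod_cast Nat.lt_of_lt_of_le Nat.zero_lt_one hk
  have hS0 : 0 ≤ S := by
    apply mul_nonneg (by positivity)
    exact Finset.sum_nonneg fun i _ => sq_nonneg _
  have hsqv : 0 < Real.sqrt v := Real.sqrt_pos.mpr hv
  have h1 : Real.sqrt ((1 / (k : ℝ)) * ∑ i, (c * ε i) ^ 2) = c * Real.sqrt S := by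
    have : (1 / (k : ℝ)) * ∑ i, (c * ε i) ^ 2 = c ^ 2 * S := by
      simp only [mul_pow, ← Finset.mul_sum, hS]; ring
    rw [this, Real.sqrt_mul (sq_nonneg c), Real.sqrt_sq hc]
  rw [h1] at hM2g
  have hRHS : (1 / (k : ℝ)) * ∑ i, (c * ε i / Real.sqrt v) * ε i
      = (c * Real.sqrt S) * Real.sqrt S / Real.sqrt v := by
    have hSS : Real.sqrt S * Real.sqrt S = S := Real.mul_self_sqrt hS0
    have : ∑ i, (c * ε i / Real.sqrt v) * ε i = (c / Real.sqrt v) * ∑ i, ε i ^ 2 := by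
      rw [Finset.mul_sum]; congr 1; ext i; ring
    rw [this, show (c * Real.sqrt S) * Real.sqrt S = c * S by rw [mul_assoc, hSS], hS]
    ring
  rw [hRHS]
  have key : ξ * Real.sqrt v * Real.sqrt S ≤ (c * Real.sqrt S) * Real.sqrt S :=
    mul_le_mul_of_nonneg_right hM2g (Real.sqrt_nonneg S)
  calc ξ * Real.sqrt S = ξ * Real.sqrt v * Real.sqrt S / Real.sqrt v := by
        field_simp
    _ ≤ (c * Real.sqrt S) * Real.sqrt S / Real.sqrt v := by gcongr
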